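/- For a bipartite pure state |ψ⟩ on H_X ⊗ H_Y and an LOCC (in particular, any separable) channel mapping it to a pure state |φ⟩ on H_X ⊗ H_Y, the Schmidt rank of φ is at most the Schmidt rank of ψ. Consequently, if |ψ⟩^{RAA'} ⊗ |Φ_K⁺⟩ is transformed by operations local to the bipartition (RA : B-side) into |ψ⟩^{RAB}, then K ≥ rank ψ^{A'}. -/

import Mathlib

open Matrix Kronecker Finset
open scoped ComplexConjugate Classical ComplexOrder

noncomputable section

/-- Density matrix (outer product) of a vector. -/
def dmv {n : Type*} (v : n → ℂ) : Matrix n n ℂ :=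
  Matrix.of fun i j => v i * conj (v j)

/-- Outer product `|u⟩⟨v|`. -/
def outer {n : Type*} (u v : n → ℂ) : Matrix n n ℂ :=
  Matrix.of fun i j => u i * conj (v j)

/-- Largest eigenvalue of a (Hermitian) matrix. -/
def maxEig {n : Type*} [Fintype n] [DecidableEq n] (A : Matrix n n ℂ) : ℝ :=
  if h : A.IsHermitian then ⨆ i, h.eigenvalues i else 0

/-- Sum of the `k` largest eigenvalues of a Hermitian matrix. -/
def topSum {n : Type*} [Fintype n] [DecidableEq n] (A : Matrix n n ℂ) (k : ℕ) : ℝ :=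
  if h : A.IsHermitian then
    sSup {x : ℝ | ∃ s : Finset n, s.card = k ∧ x = ∑ i ∈ s, h.eigenvalues i}
  else 0

/-- Majorization of Hermitian operators: `A ≺ B` (possibly on different spaces):
every partial sum of the `k` largest eigenvalues of `A` is at most that of `B`,
and the traces agree. -/
def Maj {m n : Type*} [Fintype m] [DecidableEq m] [Fintype n] [DecidableEq n]
    (A : Matrix m m ℂ) (B : Matrix n n ℂ) : Prop :=
  (∀ k : ℕ, topSum A k ≤ topSum B k) ∧ A.trace = B.trace

/-- The positive semidefinite square root of a positive semidefinite matrix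
(the definition removed from Mathlib, restated with its old meaning). -/
def Matrix.PosSemidef.sqrt {n : Type*} [Fintype n] [DecidableEq n] {A : Matrix n n ℂ}
    (hA : A.PosSemidef) : Matrix n n ℂ :=
  (hA.1.eigenvectorUnitary : Matrix n n ℂ) * diagonal ((↑) ∘ (√·) ∘ hA.1.eigenvalues) *
    (star hA.1.eigenvectorUnitary : Matrix n n ℂ)

/-- Total matrix square root: the positive square root for PSD matrices, `0` otherwise. -/
def msqrt {n : Type*} [Fintype n] [DecidableEq n] (A : Matrix n n ℂ) : Matrix n n ℂ :=
  if h : A.PosSemidef then h.sqrt else 0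

/-- Trace norm (sum of singular values). -/
def traceNorm {n : Type*} [Fintype n] [DecidableEq n] (A : Matrix n n ℂ) : ℝ :=
  ((msqrt (Aᴴ * A)).trace).re

/-- Fidelity `F(ρ,σ) = ‖√ρ √σ‖₁`. -/
def fid {n : Type*} [Fintype n] [DecidableEq n] (ρ σ : Matrix n n ℂ) : ℝ :=
  traceNorm (msqrt ρ * msqrt σ)

/-- Purified distance `P(ρ,σ) = √(1 − F²(ρ,σ))`. -/
def pd {n : Type*} [Fintype n] [DecidableEq n] (ρ σ : Matrix n n ℂ) : ℝ :=
  Real.sqrt (1 - fid ρ σ ^ 2)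

/-- Choi matrix of a map on matrices. -/
def choi {m n : Type*} [Fintype m] [DecidableEq m]
    (N : Matrix m m ℂ → Matrix n n ℂ) : Matrix (m × n) (m × n) ℂ :=
  Matrix.of fun p q => N (Matrix.single p.1 q.1 1) p.2 q.2

/-- A map is mixed-unitary if it is a convex combination of unitary conjugations. -/
def IsMixedUnitary {n : Type*} [Fintype n] [DecidableEq n]
    (N : Matrix n n ℂ → Matrix n n ℂ) : Prop :=
  ∃ (m : ℕ) (p : Fin m → ℝ) (U : Fin m → Matrix n n ℂ),
    (∀ i, 0 ≤ p i) ∧ (∑ i, p i = 1) ∧ (∀ i, U i ∈ Matrix.unitaryGroup n ℂ) ∧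
    ∀ ρ, N ρ = ∑ i, (p i : ℂ) • (U i * ρ * (U i)ᴴ)

/-- `id_R ⊗ M` acting blockwise on a matrix on `R × S`. -/
def idTensor {R S T : Type*} (M : Matrix S S ℂ →ₗ[ℂ] Matrix T T ℂ)
    (ρ : Matrix (R × S) (R × S) ℂ) : Matrix (R × T) (R × T) ℂ :=
  Matrix.of fun p q => M (Matrix.of fun s s' => ρ (p.1, s) (q.1, s')) p.2 q.2

end

private lemma sum_mul_conj_eq_zero {ι : Type*} [Fintype ι] (z : ι → ℂ)
    (h : ∑ k, z k * conj (z k) = 0) : ∀ k, z k = 0 := by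
  have h' : ∑ k, Complex.normSq (z k) = 0 := by
    have h2 : ((∑ k, Complex.normSq (z k) : ℝ) : ℂ) = ((0 : ℝ) : ℂ) := by
      push_cast
      simpa [Complex.mul_conj] using h
    exact_mod_cast h2
  intro k
  have := (Finset.sum_eq_zero_iff_of_nonneg
    (fun i _ => Complex.normSq_nonneg (z i))).mp h' k (Finset.mem_univ k)
  exact Complex.normSq_eq_zero.mp this

private lemma quad {n ι : Type*} [Fintype n] [Fintype ι]
    (v : ι → n → ℂ) (φ : n → ℂ)
    (hent : ∀ i j, ∑ k, v k i * conj (v k j) = φ i * conj (φ j)) (w : n → ℂ) :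
    ∑ k, (∑ i, conj (w i) * v k i) * conj (∑ i, conj (w i) * v k i)
      = (∑ i, conj (w i) * φ i) * conj (∑ i, conj (w i) * φ i) := by
  have expand : ∀ u : n → ℂ,
      (∑ i, conj (w i) * u i) * conj (∑ j, conj (w j) * u j)
        = ∑ i, ∑ j, conj (w i) * w j * (u i * conj (u j)) := by
    intro u
    rw [map_sum, Finset.sum_mul_sum]
    refine Finset.sum_congr rfl fun i _ => Finset.sum_congr rfl fun j _ => ?_
    simp only [RingHom.map_mul, Complex.conj_conj]
    ring
  calc ∑ k, (∑ i, conj (w i) * v k i) * conj (∑ i, conj (w i) * v k i)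
      = ∑ k, ∑ i, ∑ j, conj (w i) * w j * (v k i * conj (v k j)) := by
        exact Finset.sum_congr rfl fun k _ => expand (v k)
    _ = ∑ i, ∑ j, conj (w i) * w j * (∑ k, v k i * conj (v k j)) := by
        rw [Finset.sum_comm]
        refine Finset.sum_congr rfl fun i _ => ?_
        rw [Finset.sum_comm]
        refine Finset.sum_congr rfl fun j _ => ?_
        rw [Finset.mul_sum]
    _ = ∑ i, ∑ j, conj (w i) * w j * (φ i * conj (φ j)) := by
        refine Finset.sum_congr rfl fun i _ => Finset.sum_congr rfl fun j _ => ?_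
        rw [hent]
    _ = _ := (expand φ).symm

private lemma key {n ι : Type*} [Fintype n] [Fintype ι]
    (v : ι → n → ℂ) (φ : n → ℂ)
    (hent : ∀ i j, ∑ k, v k i * conj (v k j) = φ i * conj (φ j))
    (k : ι) : ∃ c : ℂ, v k = c • φ := by
  by_cases hφ : φ = 0
  · refine ⟨0, ?_⟩
    funext i
    have h0 := hent i i
    simp [hφ] at h0
    have := sum_mul_conj_eq_zero (fun k => v k i) h0 k
    simpa using this
  · have hd : (∑ i, conj (φ i) * φ i) ≠ 0 := by
      intro h0
      apply hφ
      funext i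
      exact sum_mul_conj_eq_zero (fun i => φ i)
        (by rw [← h0]; exact Finset.sum_congr rfl fun i _ => mul_comm _ _) i
    set d := ∑ i, conj (φ i) * φ i with hddef
    set c := (∑ i, conj (φ i) * v k i) / d with hcdef
    refine ⟨c, ?_⟩
    set w := v k - c • φ with hwdef
    have hφw : ∑ i, conj (φ i) * w i = 0 := by
      have hterm : ∀ i, conj (φ i) * w i
          = conj (φ i) * v k i - c * (conj (φ i) * φ i) := by
        intro i
        rw [show w i = v k i - c * φ i from by simp [hwdef]]
        ring
      rw [Finset.sum_congr rfl fun i _ => hterm i, Finset.sum_sub_distrib,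
        ← Finset.mul_sum, ← hddef, hcdef, div_mul_cancel₀ _ hd, sub_self]
    have hwφ : ∑ i, conj (w i) * φ i = 0 := by
      have hterm : ∀ i, conj (w i) * φ i = conj (conj (φ i) * w i) := by
        intro i
        simp only [RingHom.map_mul, Complex.conj_conj]
        ring
      rw [Finset.sum_congr rfl fun i _ => hterm i, ← map_sum, hφw, map_zero]
    have hq := quad v φ hent w
    rw [hwφ] at hq
    simp only [map_zero, mul_zero] at hq
    have hvkw : ∑ i, conj (w i) * v k i = 0 :=
      sum_mul_conj_eq_zero (fun j => ∑ i, conj (w i) * v j i) hq k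
    have hww : ∑ i, conj (w i) * w i = 0 := by
      have hterm : ∀ i, conj (w i) * w i
          = conj (w i) * v k i - c * (conj (w i) * φ i) := by
        intro i
        rw [show w i = v k i - c * φ i from by simp [hwdef]]
        ring
      rw [Finset.sum_congr rfl fun i _ => hterm i, Finset.sum_sub_distrib,
        ← Finset.mul_sum, hvkw, hwφ, mul_zero, sub_self]
    have hw0 : w = 0 := by
      funext i
      exact sum_mul_conj_eq_zero (fun i => w i)
        (by rw [← hww]; exact Finset.sum_congr rfl fun i _ => mul_comm _ _) i
    have h1 : v k - c • φ = 0 := hwdef ▸ hw0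
    exact sub_eq_zero.mp h1

private lemma dmv_conjM {m n : Type*} [Fintype n] (M : Matrix m n ℂ) (v : n → ℂ) :
    M * dmv v * Mᴴ = dmv (M.mulVec v) := by
  ext i j
  simp only [dmv, Matrix.mul_apply, Matrix.mulVec, dotProduct,
    Matrix.conjTranspose_apply, Matrix.of_apply, map_sum, Finset.sum_mul,
    Finset.mul_sum, RingHom.map_mul, Complex.star_def]
  refine Finset.sum_congr rfl fun l _ => Finset.sum_congr rfl fun a _ => ?_
  ring

private lemma kron_mulVec {X Y X' Y' : Type*} [Fintype X] [Fintype Y]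
    (A : Matrix X' X ℂ) (B : Matrix Y' Y ℂ) (v : X × Y → ℂ) :
    (Matrix.of fun x' y' => (A ⊗ₖ B).mulVec v (x', y'))
      = A * (Matrix.of fun x y => v (x, y)) * Bᵀ := by
  ext x' y'
  simp only [Matrix.of_apply, Matrix.mulVec, dotProduct, Matrix.mul_apply,
    Matrix.kroneckerMap_apply, Fintype.sum_prod_type, Matrix.transpose_apply,
    Finset.sum_mul, Finset.mul_sum]
  rw [Finset.sum_comm]
  refine Finset.sum_congr rfl fun y _ => Finset.sum_congr rfl fun x _ => ?_
  ring

private lemma part1 (X Y X' Y' ι : Type) [Fintype X] [Fintype Y] [Fintype X']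
    [Fintype Y'] [Fintype ι]
    (ψ : X × Y → ℂ) (φ : X' × Y' → ℂ)
    (A : ι → Matrix X' X ℂ) (B : ι → Matrix Y' Y ℂ)
    (hφn : ∑ x, ‖φ x‖ ^ 2 = 1)
    (hch : ∑ k, (A k ⊗ₖ B k) * dmv ψ * (A k ⊗ₖ B k)ᴴ = dmv φ) :
    (Matrix.of fun (x : X') (y : Y') => φ (x, y)).rank ≤
      (Matrix.of fun (x : X) (y : Y) => ψ (x, y)).rank := by
  simp only [dmv_conjM] at hch
  set v : ι → X' × Y' → ℂ := fun k => (A k ⊗ₖ B k).mulVec ψ with hv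
  have hent : ∀ i j, ∑ k, v k i * conj (v k j) = φ i * conj (φ j) := by
    intro i j
    have := congrFun (congrFun hch i) j
    simpa [dmv, Matrix.sum_apply] using this
  obtain ⟨i0, hi0⟩ : ∃ i, φ i ≠ 0 := by
    by_contra h
    push_neg at h
    rw [Finset.sum_eq_zero (fun x _ => by simp [h x])] at hφn
    exact one_ne_zero hφn.symm
  obtain ⟨k, hk⟩ : ∃ k, v k i0 ≠ 0 := by
    by_contra h
    push_neg at h
    have h0 := hent i0 i0
    rw [Finset.sum_eq_zero (fun k _ => by simp [h k])] at h0
    rcases mul_eq_zero.mp h0.symm with h1 | h1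
    · exact hi0 h1
    · exact hi0 (by simpa using h1)
  obtain ⟨c, hc⟩ := key v φ hent k
  have hcne : c ≠ 0 := by
    rintro rfl
    rw [hc] at hk
    simp at hk
  have hmat : (Matrix.of fun (x : X') (y : Y') => φ (x, y))
      = (c⁻¹ • A k) * (Matrix.of fun (x : X) (y : Y) => ψ (x, y)) * (B k)ᵀ := by
    rw [Matrix.smul_mul, Matrix.smul_mul, ← kron_mulVec]
    ext x y
    have h2 : (A k ⊗ₖ B k).mulVec ψ (x, y) = c * φ (x, y) := congrFun hc (x, y)
    simp only [Matrix.smul_apply, Matrix.of_apply, smul_eq_mul]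
    rw [h2, inv_mul_cancel_left₀ hcne]
  rw [hmat]
  exact (Matrix.rank_mul_le_left _ _).trans (Matrix.rank_mul_le_right _ _)

/-- the Schmidt rank is monotone under separable (in particular LOCC)
channels; consequently exact state splitting requires `K ≥ rank ψ^{A'}`. -/
theorem stmt13 :
    (∀ (X Y X' Y' ι : Type) [Fintype X] [Fintype Y] [Fintype X'] [Fintype Y'] [Fintype ι]
      [DecidableEq X] [DecidableEq Y] [DecidableEq X'] [DecidableEq Y']
      (ψ : X × Y → ℂ) (φ : X' × Y' → ℂ)
      (A : ι → Matrix X' X ℂ) (B : ι → Matrix Y' Y ℂ),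
      (∑ x, ‖ψ x‖ ^ 2 = 1) → (∑ x, ‖φ x‖ ^ 2 = 1) →
      (∑ k, (A k ⊗ₖ B k)ᴴ * (A k ⊗ₖ B k) = 1) →
      (∑ k, (A k ⊗ₖ B k) * dmv ψ * (A k ⊗ₖ B k)ᴴ = dmv φ) →
      (Matrix.of fun (x : X') (y : Y') => φ (x, y)).rank ≤
        (Matrix.of fun (x : X) (y : Y) => ψ (x, y)).rank) ∧
    (∀ (R A2 A' ι : Type) [Fintype R] [Fintype A2] [Fintype A'] [Fintype ι]
      [DecidableEq R] [DecidableEq A2] [DecidableEq A']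
      (K : ℕ) (_ : 0 < K)
      (ψ0 : R × A2 × A' → ℂ) (_ : ∑ x, ‖ψ0 x‖ ^ 2 = 1)
      (E : ι → Matrix (R × A2) (R × A2 × A' × Fin K) ℂ)
      (F : ι → Matrix A' (Fin K) ℂ),
      (∑ k, (E k ⊗ₖ F k)ᴴ * (E k ⊗ₖ F k) = 1) →
      (∑ k, (E k ⊗ₖ F k) *
          dmv (fun p : (R × A2 × A' × Fin K) × Fin K =>
            ψ0 (p.1.1, p.1.2.1, p.1.2.2.1) * ((Real.sqrt K : ℝ) : ℂ)⁻¹ *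
              (if p.1.2.2.2 = p.2 then 1 else 0)) *
          (E k ⊗ₖ F k)ᴴ =
        dmv (fun p : (R × A2) × A' => ψ0 (p.1.1, p.1.2, p.2))) →
      (Matrix.of fun (x : R × A2) (y : A') => ψ0 (x.1, x.2, y)).rank ≤ K) := by
  have main := @part1
  constructor
  · intro X Y X' Y' ι _ _ _ _ _ _ _ _ _ ψ φ A B hψ hφ htp hch
    exact main X Y X' Y' ι ψ φ A B hφ hch
  · intro R A2 A' ι _ _ _ _ _ _ _ K hK ψ0 hψ0 E F htp hch
    have hφn : ∑ p : (R × A2) × A',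
        ‖(fun p : (R × A2) × A' => ψ0 (p.1.1, p.1.2, p.2)) p‖ ^ 2 = 1 := by
      simpa [Fintype.sum_prod_type] using hψ0
    have h := part1 (R × A2 × A' × Fin K) (Fin K) (R × A2) A' ι
      (fun p : (R × A2 × A' × Fin K) × Fin K =>
        ψ0 (p.1.1, p.1.2.1, p.1.2.2.1) * ((Real.sqrt K : ℝ) : ℂ)⁻¹ *
          (if p.1.2.2.2 = p.2 then 1 else 0))
      (fun p : (R × A2) × A' => ψ0 (p.1.1, p.1.2, p.2)) E F hφn hch
    exact h.trans ((Matrix.rank_le_card_width _).trans (by simp))
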